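/- Let κ be regular uncountable, c : [κ]² → ω, I a normal uniform ideal on κ, and let B₀*, B₁* be I-positive sets with i, j ∈ ω such that: (1) (B₀*, B₁*) is (i,j)-frequent; (2) for every α ∈ B₀*, the set {β ∈ B₁* : c(α,β) = i} is I-positive; and (3) for every β' ∈ B₁*, the set {α' ∈ B₀* : c(β',α') = j} is I-positive. Then the graph (B₀* ∪ B₁*, c⁻¹({i,j}) ∩ [B₀* ∪ B₁*]²) is highly connected. -/

import Mathlib

/-- An ideal of subsets of `α`. -/
def IsIdeal {α : Type*} (I : Set (Set α)) : Prop :=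
  ∅ ∈ I ∧ (∀ ⦃A B : Set α⦄, A ∈ I → B ⊆ A → B ∈ I) ∧
    (∀ ⦃A B : Set α⦄, A ∈ I → B ∈ I → A ∪ B ∈ I)

/-- `I` is countably complete (σ-complete): closed under countable unions. -/
def CountablyComplete {α : Type*} (I : Set (Set α)) : Prop :=
  ∀ f : ℕ → Set α, (∀ n, f n ∈ I) → (⋃ n, f n) ∈ I

/-- `I` is uniform: every set of size `< |α|` is in `I`. -/
def UniformIdeal {α : Type*} (I : Set (Set α)) : Prop :=
  ∀ A : Set α, Cardinal.mk A < Cardinal.mk α → A ∈ I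

/-- `I` is normal: closed under diagonal unions. -/
def NormalIdeal {α : Type*} [LinearOrder α] (I : Set (Set α)) : Prop :=
  ∀ A : α → Set α, (∀ γ, A γ ∈ I) → {b : α | ∃ γ < b, b ∈ A γ} ∈ I

/-- The pair `(B₀, B₁)` of `I`-positive sets is `(i,j)`-frequent for the coloring `c`:
for all `I`-positive `B₀' ⊆ B₀` and `B₁' ⊆ B₁` there are `α < β` with `α ∈ B₀'`,
`β ∈ B₁'`, `c α β = i`, and `β' < α'` with `β' ∈ B₁'`, `α' ∈ B₀'`, `c β' α' = j`. -/
def Freq2 {α : Type*} [LinearOrder α] (I : Set (Set α)) (c : α → α → ℕ)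
    (B₀ B₁ : Set α) (i j : ℕ) : Prop :=
  ∀ B₀' ⊆ B₀, B₀' ∉ I → ∀ B₁' ⊆ B₁, B₁' ∉ I →
    (∃ a ∈ B₀', ∃ b ∈ B₁', a < b ∧ c a b = i) ∧
    (∃ b ∈ B₁', ∃ a ∈ B₀', b < a ∧ c b a = j)

/-- Any two points of `X` are connected by an `E`-path inside `X`. -/
def ConnectedIn {α : Type*} (E : α → α → Prop) (X : Set α) : Prop :=
  ∀ a ∈ X, ∀ b ∈ X, Relation.ReflTransGen (fun u v => u ∈ X ∧ v ∈ X ∧ E u v) a b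

/-- The graph `(X, E)` is highly connected: removing any set of fewer than `|X|`
vertices leaves it connected. -/
def HighlyConnected {α : Type*} (E : α → α → Prop) (X : Set α) : Prop :=
  ∀ Y : Set α, Cardinal.mk Y < Cardinal.mk X → ConnectedIn E (X \ Y)

/-- if `(B₀*, B₁*)` is an `(i,j)`-frequent pair of `I`-positive sets such that
every `α ∈ B₀*` has `I`-positively many `i`-neighbors in `B₁*` and every `β' ∈ B₁*` has
`I`-positively many `j`-neighbors in `B₀*`, then `(B₀* ∪ B₁*, c⁻¹({i,j}))` is highly
connected. -/
theorem stmt5 {α : Type*} [LinearOrder α] [WellFoundedLT α]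
    (hreg : (Cardinal.mk α).IsRegular) (hunc : Cardinal.aleph0 < Cardinal.mk α)
    (I : Set (Set α)) (hI : IsIdeal I) (hn : NormalIdeal I) (hu : UniformIdeal I)
    (c : α → α → ℕ) (csym : ∀ a b, c a b = c b a)
    (B₀ B₁ : Set α) (hB₀ : B₀ ∉ I) (hB₁ : B₁ ∉ I) (i j : ℕ)
    (hfreq : Freq2 I c B₀ B₁ i j)
    (h2 : ∀ a ∈ B₀, {b ∈ B₁ | c a b = i} ∉ I)
    (h3 : ∀ b ∈ B₁, {a ∈ B₀ | c b a = j} ∉ I) :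
    HighlyConnected (fun x y => x ≠ y ∧ (c x y = i ∨ c x y = j)) (B₀ ∪ B₁) := by
  intro Y hY
  obtain ⟨hIe, hImono, hIun⟩ := hI
  have hYI : Y ∈ I := hu Y (lt_of_lt_of_le hY (Cardinal.mk_set_le _))
  have hdiff : ∀ B : Set α, B ∉ I → ∀ S ∈ I, B \ S ∉ I := by
    intro B hB S hS h
    refine hB (hImono (hIun h hS) ?_)
    intro x hx
    by_cases hxS : x ∈ S
    · exact Or.inr hxS
    · exact Or.inl ⟨hx, hxS⟩
  have hsing : ∀ x : α, ({x} : Set α) ∈ I := by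
    intro x
    apply hu
    rw [Cardinal.mk_singleton]
    exact lt_trans Cardinal.one_lt_aleph0 hunc
  have hne : ∀ S : Set α, S ∉ I → S.Nonempty := by
    intro S hS
    rw [Set.nonempty_iff_ne_empty]
    rintro rfl
    exact hS hIe
  set X : Set α := (B₀ ∪ B₁) \ Y with hX
  set R : α → α → Prop :=
    fun u v => u ∈ X ∧ v ∈ X ∧ u ≠ v ∧ (c u v = i ∨ c u v = j) with hR
  have hsymm : Symmetric R := by
    rintro u v ⟨h1, h2, h3, h4⟩
    exact ⟨h2, h1, h3.symm, by rwa [csym]⟩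
  have key : ∀ a ∈ B₀ \ Y, ∀ b ∈ B₁ \ Y, Relation.ReflTransGen R a b := by
    intro a ha b hb
    have hB1' : ({y ∈ B₁ | c a y = i} \ (Y ∪ {a})) ∉ I :=
      hdiff _ (h2 a ha.1) _ (hIun hYI (hsing a))
    have hB0' : ({x ∈ B₀ | c b x = j} \ (Y ∪ {b})) ∉ I :=
      hdiff _ (h3 b hb.1) _ (hIun hYI (hsing b))
    obtain ⟨⟨u, hu', v, hv', hlt, hc⟩, -⟩ :=
      hfreq _ (fun x hx => hx.1.1) hB0' _ (fun x hx => hx.1.1) hB1'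
    have huX : u ∈ X := ⟨Or.inl hu'.1.1, fun h => hu'.2 (Or.inl h)⟩
    have hvX : v ∈ X := ⟨Or.inr hv'.1.1, fun h => hv'.2 (Or.inl h)⟩
    have haX : a ∈ X := ⟨Or.inl ha.1, ha.2⟩
    have hbX : b ∈ X := ⟨Or.inr hb.1, hb.2⟩
    have s1 : R a v := by
      refine ⟨haX, hvX, ?_, Or.inl ?_⟩
      · intro h; exact hv'.2 (Or.inr (by simp [h.symm]))
      · exact hv'.1.2
    have s2 : R v u := ⟨hvX, huX, (ne_of_lt hlt).symm, Or.inl (by rw [csym]; exact hc)⟩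
    have s3 : R u b := by
      refine ⟨huX, hbX, ?_, Or.inr (by rw [csym]; exact hu'.1.2)⟩
      intro h; exact hu'.2 (Or.inr (by simp [h]))
    exact Relation.ReflTransGen.head s1 (Relation.ReflTransGen.head s2
      (Relation.ReflTransGen.single s3))
  have hsymmRT : ∀ {a b : α}, Relation.ReflTransGen R a b → Relation.ReflTransGen R b a :=
    fun h => (@Relation.ReflTransGen.symmetric _ R ⟨hsymm⟩).symm _ _ h
  intro x hx y hy
  have hx' : x ∈ B₀ \ Y ∨ x ∈ B₁ \ Y := by
    rcases hx.1 with h | h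
    · exact Or.inl ⟨h, hx.2⟩
    · exact Or.inr ⟨h, hx.2⟩
  have hy' : y ∈ B₀ \ Y ∨ y ∈ B₁ \ Y := by
    rcases hy.1 with h | h
    · exact Or.inl ⟨h, hy.2⟩
    · exact Or.inr ⟨h, hy.2⟩
  rcases hx' with hx' | hx' <;> rcases hy' with hy' | hy'
  · obtain ⟨b, hb⟩ := hne (B₁ \ Y) (hdiff _ hB₁ _ hYI)
    exact (key x hx' b hb).trans (hsymmRT (key y hy' b hb))
  · exact key x hx' y hy'
  · exact hsymmRT (key y hy' x hx')
  · obtain ⟨a, ha⟩ := hne (B₀ \ Y) (hdiff _ hB₀ _ hYI)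
    exact (hsymmRT (key a ha x hx')).trans (key a ha y hy')
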